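/- Let d ≥ 1, X = [0,1]^d, let f, g : X → ℝ be bounded and measurable with f(x) ≤ g(x) for all x ∈ X, let n ∈ ℕ, and set p_R := (1 − Z_f/Z_g)^n. Define the probability measure P̃ := (1 − p_R)·P_f + p_R·P_g (the output distribution of rejection sampling with proposal P_g limited to n trials). Then: (i) p_R ≤ exp(−n·Z_f/Z_g); (ii) D_TV(P_f, P̃) = p_R · D_TV(P_f, P_g); (iii) D_suplog(P_f, P̃) ≤ min{ D_suplog(P_f, P_g), p_R·(exp(D_suplog(P_f, P_g)) − 1) }. -/

import Mathlib

open MeasureTheory Real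

noncomputable section

/-- The unit cube `[0,1]^d` in `ℝ^d`. -/
def cube (d : ℕ) : Set (Fin d → ℝ) := Set.Icc 0 1

/-- The partition function `Z_f = ∫_X exp(f(x)) dx`. -/
def partZ {d : ℕ} (f : (Fin d → ℝ) → ℝ) : ℝ := ∫ x in cube d, Real.exp (f x)

/-- The log-partition function `L_f = log Z_f`. -/
def logPart {d : ℕ} (f : (Fin d → ℝ) → ℝ) : ℝ := Real.log (partZ f)

/-- The Gibbs measure `P_f` with density `exp(f(x))/Z_f` w.r.t. Lebesgue measure on the cube. -/
def gibbs {d : ℕ} (f : (Fin d → ℝ) → ℝ) : Measure (Fin d → ℝ) :=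
  (volume.restrict (cube d)).withDensity fun x => ENNReal.ofReal (Real.exp (f x) / partZ f)

/-- Essential supremum norm `‖h‖_∞` over the cube. -/
def supNormOn {d : ℕ} (h : (Fin d → ℝ) → ℝ) : ℝ :=
  essSup (fun x => |h x|) (volume.restrict (cube d))

/-- Total variation distance between two measures: `sup_A |P(A) − Q(A)|`. -/
def DTV {α : Type*} [MeasurableSpace α] (P Q : Measure α) : ℝ :=
  ⨆ A : {A : Set α // MeasurableSet A}, |(P A.1).toReal - (Q A.1).toReal|

/-- `f` is bounded on the cube. -/
def BddOnCube {d : ℕ} (f : (Fin d → ℝ) → ℝ) : Prop := ∃ C, ∀ x ∈ cube d, |f x| ≤ C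

lemma cube_volume (d : ℕ) : volume (cube d) = 1 := by
  rw [cube, Real.volume_Icc_pi]; simp

instance cube_finite (d : ℕ) : IsFiniteMeasure (volume.restrict (cube d)) := by
  constructor
  rw [Measure.restrict_apply_univ, cube_volume]
  exact ENNReal.one_lt_top

lemma exp_integrable {d : ℕ} (f : (Fin d → ℝ) → ℝ) (hfm : Measurable f)
    (hfb : BddOnCube f) :
    IntegrableOn (fun x => Real.exp (f x)) (cube d) := by
  obtain ⟨C, hC⟩ := hfb
  refine Integrable.mono' (integrable_const (Real.exp C))
    ((Real.measurable_exp.comp hfm).aestronglyMeasurable) ?_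
  filter_upwards [ae_restrict_mem (measurableSet_Icc : MeasurableSet (cube d))] with x hx
  rw [Real.norm_eq_abs, abs_of_pos (Real.exp_pos _)]
  exact Real.exp_le_exp.2 (le_trans (le_abs_self _) (hC x hx))

lemma partZ_pos {d : ℕ} (f : (Fin d → ℝ) → ℝ) (hfm : Measurable f)
    (hfb : BddOnCube f) : 0 < partZ f := by
  obtain ⟨C, hC⟩ := hfb
  have h1 : ∫ _x in cube d, Real.exp (-C) ≤ partZ f := by
    refine setIntegral_mono_on (integrable_const _) (exp_integrable f hfm ⟨C, hC⟩)
      measurableSet_Icc ?_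
    intro x hx
    exact Real.exp_le_exp.2 (neg_le_of_abs_le (hC x hx))
  have h2 : ∫ _x in cube d, Real.exp (-C) = Real.exp (-C) := by
    rw [setIntegral_const, measureReal_def, cube_volume]; simp
  rw [h2] at h1
  exact lt_of_lt_of_le (Real.exp_pos _) h1

lemma gibbs_univ {d : ℕ} (f : (Fin d → ℝ) → ℝ) (hfm : Measurable f)
    (hfb : BddOnCube f) : gibbs f Set.univ = 1 := by
  have hZ := partZ_pos f hfm hfb
  rw [gibbs, withDensity_apply _ MeasurableSet.univ, Measure.restrict_univ]
  have hint : Integrable (fun x => Real.exp (f x) / partZ f) (volume.restrict (cube d)) :=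
    (exp_integrable f hfm hfb).div_const _
  rw [← ofReal_integral_eq_lintegral_ofReal hint
    (Filter.Eventually.of_forall fun x => div_nonneg (Real.exp_pos _).le hZ.le)]
  have : ∫ x, Real.exp (f x) / partZ f ∂(volume.restrict (cube d)) = 1 := by
    rw [integral_div]
    exact div_self hZ.ne'
  rw [this, ENNReal.ofReal_one]

lemma gibbs_ne_top {d : ℕ} (f : (Fin d → ℝ) → ℝ) (hfm : Measurable f)
    (hfb : BddOnCube f) (A : Set (Fin d → ℝ)) : gibbs f A ≠ ⊤ := by
  refine ne_top_of_le_ne_top ?_ (measure_mono (Set.subset_univ A))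
  rw [gibbs_univ f hfm hfb]
  exact ENNReal.one_ne_top

lemma amgm_exp {p t : ℝ} (hp0 : 0 ≤ p) (hp1 : p ≤ 1) :
    Real.exp (p * t) ≤ (1 - p) + p * Real.exp t := by
  have h := Real.geom_mean_le_arith_mean2_weighted (by linarith : (0:ℝ) ≤ 1 - p) hp0
    zero_le_one (Real.exp_pos t).le (by ring)
  rw [Real.one_rpow, one_mul, ← Real.exp_mul, mul_comm t p] at h
  linarith

lemma key_log_bound {p t : ℝ} (hp0 : 0 ≤ p) (hp1 : p ≤ 1) :
    |Real.log ((1 - p) + p * Real.exp t)| ≤ min |t| (p * (Real.exp |t| - 1)) := by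
  set W : ℝ := (1 - p) + p * Real.exp t with hWdef
  have hW : Real.exp (p * t) ≤ W := amgm_exp hp0 hp1
  have hWpos : 0 < W := lt_of_lt_of_le (Real.exp_pos _) hW
  have hlow : p * t ≤ Real.log W := by
    have := Real.log_le_log (Real.exp_pos _) hW
    rwa [Real.log_exp] at this
  have habs : |t| ≤ Real.exp |t| - 1 := by
    have := Real.add_one_le_exp |t|; linarith
  have h1le : (1:ℝ) ≤ Real.exp |t| := Real.one_le_exp (abs_nonneg t)
  have hexptle : Real.exp t ≤ Real.exp |t| := Real.exp_le_exp.2 (le_abs_self t)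
  have hup1 : Real.log W ≤ |t| := by
    rw [Real.log_le_iff_le_exp hWpos]
    nlinarith
  have hup2 : Real.log W ≤ p * (Real.exp |t| - 1) := by
    have := Real.log_le_sub_one_of_pos hWpos
    nlinarith
  have hneg : -|t| ≤ t := neg_abs_le t
  have hlow1 : -|t| ≤ Real.log W := by nlinarith [abs_nonneg t]
  have hlow2 : -(p * (Real.exp |t| - 1)) ≤ Real.log W := by nlinarith [abs_nonneg t]
  rw [abs_le]
  refine ⟨?_, le_min hup1 hup2⟩
  rcases le_total |t| (p * (Real.exp |t| - 1)) with h | h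
  · rw [min_eq_left h]; linarith
  · rw [min_eq_right h]; linarith

/-- Lemma 2.9, general rejection sampling bound.
For bounded measurable `f ≤ g` on `X = [0,1]^d`, `n ∈ ℕ`, `p_R := (1 − Z_f/Z_g)^n`, and the
output distribution `P̃ := (1 − p_R) P_f + p_R P_g` of rejection sampling limited to `n` trials:
(i) `p_R ≤ exp(−n Z_f/Z_g)`;
(ii) `D_TV(P_f, P̃) = p_R · D_TV(P_f, P_g)`;
(iii) `D_suplog(P_f, P̃) ≤ min{D_suplog(P_f, P_g), p_R (exp(D_suplog(P_f, P_g)) − 1)}`,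
where `D_suplog(P_f, P̃)` is the essential sup over `X` of the absolute log-ratio of the
density `(1−p_R) e^{f−L_f} + p_R e^{g−L_g}` of `P̃` to the density `e^{f−L_f}` of `P_f`. -/
theorem rejection_sampling_bounds (d n : ℕ) (hd : 1 ≤ d) (f g : (Fin d → ℝ) → ℝ)
    (hfm : Measurable f) (hgm : Measurable g)
    (hfb : BddOnCube f) (hgb : BddOnCube g)
    (hfg : ∀ x ∈ cube d, f x ≤ g x)
    (pR : ℝ) (hpR : pR = (1 - partZ f / partZ g) ^ n)
    (Pt : Measure (Fin d → ℝ))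
    (hPt : Pt = ENNReal.ofReal (1 - pR) • gibbs f + ENNReal.ofReal pR • gibbs g) :
    pR ≤ Real.exp (-(n : ℝ) * (partZ f / partZ g)) ∧
    DTV (gibbs f) Pt = pR * DTV (gibbs f) (gibbs g) ∧
    supNormOn (fun x =>
        Real.log ((1 - pR) * Real.exp (f x - logPart f) + pR * Real.exp (g x - logPart g))
          - (f x - logPart f)) ≤
      min (supNormOn (fun x => (f x - logPart f) - (g x - logPart g)))
        (pR * (Real.exp (supNormOn (fun x => (f x - logPart f) - (g x - logPart g))) - 1)) := by
  have hZf : 0 < partZ f := partZ_pos f hfm hfb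
  have hZg : 0 < partZ g := partZ_pos g hgm hgb
  have hZfg : partZ f ≤ partZ g := by
    refine setIntegral_mono_on (exp_integrable f hfm hfb) (exp_integrable g hgm hgb)
      measurableSet_Icc ?_
    intro x hx
    exact Real.exp_le_exp.2 (hfg x hx)
  set r : ℝ := partZ f / partZ g with hr
  have hr0 : 0 < r := div_pos hZf hZg
  have hr1 : r ≤ 1 := div_le_one_of_le₀ hZfg hZg.le
  have hpR0 : 0 ≤ pR := by rw [hpR]; exact pow_nonneg (by linarith) n
  have hpR1 : pR ≤ 1 := by
    rw [hpR]; exact pow_le_one₀ (by linarith) (by linarith)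
  refine ⟨?_, ?_, ?_⟩
  · -- (i)
    have h2 : 1 - r ≤ Real.exp (-r) := by
      have := Real.add_one_le_exp (-r); linarith
    calc pR = (1 - r) ^ n := hpR
      _ ≤ (Real.exp (-r)) ^ n := pow_le_pow_left₀ (by linarith) h2 n
      _ = Real.exp ((n : ℝ) * (-r)) := (Real.exp_nat_mul _ n).symm
      _ = Real.exp (-(n : ℝ) * r) := by ring_nf
  · -- (ii)
    have hfin_f := gibbs_ne_top f hfm hfb
    have hfin_g := gibbs_ne_top g hgm hgb
    have hPtA : ∀ A : Set (Fin d → ℝ),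
        (Pt A).toReal = (1 - pR) * (gibbs f A).toReal + pR * (gibbs g A).toReal := by
      intro A
      rw [hPt, Measure.add_apply, Measure.smul_apply, Measure.smul_apply,
        smul_eq_mul, smul_eq_mul,
        ENNReal.toReal_add (ENNReal.mul_ne_top ENNReal.ofReal_ne_top (hfin_f A))
          (ENNReal.mul_ne_top ENNReal.ofReal_ne_top (hfin_g A)),
        ENNReal.toReal_mul, ENNReal.toReal_mul,
        ENNReal.toReal_ofReal hpR0, ENNReal.toReal_ofReal (by linarith : (0:ℝ) ≤ 1 - pR)]
    have hS : (fun A : {A : Set (Fin d → ℝ) // MeasurableSet A} =>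
        |(gibbs f A.1).toReal - (Pt A.1).toReal|) =
        fun A => pR * |(gibbs f A.1).toReal - (gibbs g A.1).toReal| := by
      funext A
      rw [hPtA A, show (gibbs f A.1).toReal -
          ((1 - pR) * (gibbs f A.1).toReal + pR * (gibbs g A.1).toReal)
          = pR * ((gibbs f A.1).toReal - (gibbs g A.1).toReal) by ring,
        abs_mul, abs_of_nonneg hpR0]
    rw [DTV, hS, DTV, ← Real.mul_iSup_of_nonneg hpR0]
  · -- (iii)
    set μ := volume.restrict (cube d) with hμ
    have hμ0 : μ ≠ 0 := by
      intro h
      have : μ Set.univ = 0 := by rw [h]; rfl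
      rw [hμ, Measure.restrict_apply_univ, cube_volume] at this
      exact one_ne_zero this
    haveI : (ae μ).NeBot := ae_neBot.mpr hμ0
    obtain ⟨Cf, hCf⟩ := hfb
    obtain ⟨Cg, hCg⟩ := hgb
    set t : (Fin d → ℝ) → ℝ := fun x => (f x - logPart f) - (g x - logPart g) with ht
    set D : ℝ := supNormOn t with hD
    have hbdd : ∀ᵐ x ∂μ, |t x| ≤ Cf + Cg + |logPart f| + |logPart g| := by
      filter_upwards [ae_restrict_mem (measurableSet_Icc : MeasurableSet (cube d))] with x hx
      have h1 := hCf x hx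
      have h2 := hCg x hx
      have := abs_sub_abs_le_abs_sub (f x) (g x)
      calc |t x| = |(f x - g x) + (logPart g - logPart f)| := by rw [ht]; ring_nf
        _ ≤ |f x - g x| + |logPart g - logPart f| := abs_add_le _ _
        _ ≤ (|f x| + |g x|) + (|logPart g| + |logPart f|) :=
            add_le_add (abs_sub _ _) (abs_sub _ _)
        _ ≤ Cf + Cg + |logPart f| + |logPart g| := by
            have := abs_nonneg (logPart f); linarith
    have hDle : ∀ᵐ x ∂μ, |t x| ≤ D := by
      refine ae_le_essSup ⟨Cf + Cg + |logPart f| + |logPart g|, ?_⟩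
      rwa [Filter.eventually_map]
    have hD0 : 0 ≤ D := by
      obtain ⟨x, hx⟩ := hDle.exists
      exact le_trans (abs_nonneg _) hx
    rw [supNormOn]
    refine Filter.limsup_le_of_le
      (Filter.isCoboundedUnder_le_of_le _ fun x => abs_nonneg _) ?_
    filter_upwards [hDle] with x hx
    -- rewrite the log expression
    have hV : (1 - pR) * Real.exp (f x - logPart f) + pR * Real.exp (g x - logPart g)
        = Real.exp (f x - logPart f) * ((1 - pR) + pR * Real.exp (-(t x))) := by
      have hE : Real.exp (f x - logPart f) * Real.exp (-(t x))
          = Real.exp (g x - logPart g) := by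
        rw [← Real.exp_add]; congr 1; rw [ht]; ring
      nlinarith [hE]
    have hVpos : 0 < (1 - pR) + pR * Real.exp (-(t x)) :=
      lt_of_lt_of_le (Real.exp_pos _) (amgm_exp hpR0 hpR1)
    have hlog : Real.log ((1 - pR) * Real.exp (f x - logPart f)
          + pR * Real.exp (g x - logPart g)) - (f x - logPart f)
        = Real.log ((1 - pR) + pR * Real.exp (-(t x))) := by
      rw [hV, Real.log_mul (Real.exp_ne_zero _) hVpos.ne', Real.log_exp]
      ring
    rw [hlog]
    have hkey := key_log_bound (t := -(t x)) hpR0 hpR1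
    rw [abs_neg] at hkey
    refine le_trans hkey (le_min ?_ ?_)
    · exact le_trans (min_le_left _ _) hx
    · refine le_trans (min_le_right _ _) ?_
      have : Real.exp |t x| ≤ Real.exp D := Real.exp_le_exp.2 hx
      nlinarith
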